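/- Let ρ ∈ (0,1), let (y_m)_{m≥0} be a bounded real sequence with y_m → y, and let (ε_j)_{j≥1} be i.i.d. Rademacher random variables (values ±1 with probability 1/2). Then for p > 1, the partial sums S_n := Σ_{j=1}^n ρ^j y_{n−j} ε_j converge in L^p to y·Z, where Z := Σ_{j=1}^∞ ρ^j ε_j converges a.s. and in L^p. In particular E[|S_n|^p] → |y|^p E[|Z|^p]. -/

import Mathlib

open MeasureTheory

open Filter Finset in
lemma stmt14_geom_range {ρ : ℝ} (hρ0 : 0 ≤ ρ) (hρ1 : ρ < 1) (m : ℕ) :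
    ∑ i ∈ Finset.range m, ρ ^ i ≤ (1 - ρ)⁻¹ := by
  calc ∑ i ∈ Finset.range m, ρ ^ i ≤ ∑' i : ℕ, ρ ^ i :=
        Summable.sum_le_tsum _ (fun i _ => pow_nonneg hρ0 i) (summable_geometric_of_lt_one hρ0 hρ1)
    _ = (1 - ρ)⁻¹ := tsum_geometric_of_lt_one hρ0 hρ1

open Filter Finset in
lemma stmt14_geom_Ioc {ρ : ℝ} (hρ0 : 0 ≤ ρ) (hρ1 : ρ < 1) (k n : ℕ) :
    ∑ j ∈ Finset.Ioc k n, ρ ^ j ≤ ρ ^ (k + 1) * (1 - ρ)⁻¹ := by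
  rw [← Finset.Ico_add_one_add_one_eq_Ioc, Finset.sum_Ico_eq_sum_range]
  have h : ∀ i, ρ ^ (k + 1 + i) = ρ ^ (k + 1) * ρ ^ i := fun i => pow_add ρ (k+1) i
  simp_rw [h, ← Finset.mul_sum]
  exact mul_le_mul_of_nonneg_left (stmt14_geom_range hρ0 hρ1 _) (pow_nonneg hρ0 _)

open Filter Finset in
lemma stmt14_geom_Icc {ρ : ℝ} (hρ0 : 0 ≤ ρ) (hρ1 : ρ < 1) (n : ℕ) :
    ∑ j ∈ Finset.Icc 1 n, ρ ^ j ≤ (1 - ρ)⁻¹ := by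
  have h1 : Finset.Icc 1 n = Finset.Ioc 0 n := Finset.Icc_add_one_left_eq_Ioc 0 n
  rw [h1]
  calc ∑ j ∈ Finset.Ioc 0 n, ρ ^ j ≤ ρ ^ (0 + 1) * (1 - ρ)⁻¹ := stmt14_geom_Ioc hρ0 hρ1 0 n
    _ ≤ 1 * (1 - ρ)⁻¹ := by
        apply mul_le_mul_of_nonneg_right _ (le_of_lt (inv_pos.2 (by linarith)))
        rw [pow_one]; exact hρ1.le
    _ = (1 - ρ)⁻¹ := one_mul _

open Filter Finset in
lemma stmt14_conv {ρ : ℝ} (hρ0 : 0 < ρ) (hρ1 : ρ < 1)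
    {a : ℕ → ℝ} {K : ℝ} (ha0 : ∀ m, 0 ≤ a m) (haK : ∀ m, a m ≤ K)
    (ha : Filter.Tendsto a Filter.atTop (nhds 0)) :
    Filter.Tendsto (fun n => ∑ j ∈ Finset.Icc 1 n, ρ ^ j * a (n - j))
      Filter.atTop (nhds 0) := by
  have hK0 : 0 ≤ K := le_trans (ha0 0) (haK 0)
  have hIcc : ∀ m : ℕ, Finset.Icc 1 m = Finset.Ioc 0 m := fun m => Finset.Icc_add_one_left_eq_Ioc 0 m
  rw [Metric.tendsto_atTop]
  intro δ hδ
  have h1 : Tendsto (fun k : ℕ => K * (ρ ^ (k+1) * (1-ρ)⁻¹)) atTop (nhds 0) := by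
    have hg : Tendsto (fun k : ℕ => ρ ^ (k+1)) atTop (nhds 0) := by
      have := (tendsto_pow_atTop_nhds_zero_of_lt_one hρ0.le hρ1).mul_const ρ
      simp only [zero_mul] at this
      refine this.congr fun k => ?_
      rw [← pow_succ]
    have := (hg.mul_const (1-ρ)⁻¹).const_mul K
    simpa using this
  obtain ⟨k, hk⟩ := (Metric.tendsto_atTop.1 h1) (δ/2) (by linarith)
  have hk2 : K * (ρ ^ (k+1) * (1-ρ)⁻¹) < δ/2 := by
    have := hk k le_rfl
    rw [Real.dist_eq, sub_zero] at this
    calc K * (ρ ^ (k+1) * (1-ρ)⁻¹) ≤ |K * (ρ ^ (k+1) * (1-ρ)⁻¹)| := le_abs_self _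
      _ < δ/2 := this
  have hF : Tendsto (fun n => ∑ j ∈ Finset.Icc 1 k, ρ ^ j * a (n - j)) atTop (nhds 0) := by
    have := tendsto_finset_sum (Finset.Icc 1 k)
      (fun j _ => (ha.comp (tendsto_sub_atTop_nat j)).const_mul (ρ ^ j))
    simpa using this
  obtain ⟨N, hN⟩ := (Metric.tendsto_atTop.1 hF) (δ/2) (by linarith)
  refine ⟨max N k, fun n hn => ?_⟩
  have hNn : N ≤ n := le_trans (le_max_left _ _) hn
  have hkn : k ≤ n := le_trans (le_max_right _ _) hn
  have hsplit : (∑ j ∈ Finset.Ioc 0 k, ρ ^ j * a (n - j))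
      + ∑ j ∈ Finset.Ioc k n, ρ ^ j * a (n - j)
      = ∑ j ∈ Finset.Ioc 0 n, ρ ^ j * a (n - j) :=
    Finset.sum_Ioc_consecutive _ (Nat.zero_le k) hkn
  have hF1 : ∑ j ∈ Finset.Ioc 0 k, ρ ^ j * a (n - j) < δ/2 := by
    have := hN n hNn
    rw [Real.dist_eq, sub_zero] at this
    calc ∑ j ∈ Finset.Ioc 0 k, ρ ^ j * a (n - j)
        = ∑ j ∈ Finset.Icc 1 k, ρ ^ j * a (n - j) := by rw [hIcc]
      _ ≤ |∑ j ∈ Finset.Icc 1 k, ρ ^ j * a (n - j)| := le_abs_self _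
      _ < δ/2 := this
  have hF2 : ∑ j ∈ Finset.Ioc k n, ρ ^ j * a (n - j) ≤ K * (ρ ^ (k+1) * (1-ρ)⁻¹) := by
    calc ∑ j ∈ Finset.Ioc k n, ρ ^ j * a (n - j)
        ≤ ∑ j ∈ Finset.Ioc k n, K * ρ ^ j := by
          refine Finset.sum_le_sum fun j _ => ?_
          rw [mul_comm K]
          exact mul_le_mul_of_nonneg_left (haK _) (pow_nonneg hρ0.le j)
      _ = K * ∑ j ∈ Finset.Ioc k n, ρ ^ j := by rw [Finset.mul_sum]
      _ ≤ K * (ρ ^ (k+1) * (1-ρ)⁻¹) :=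
          mul_le_mul_of_nonneg_left (stmt14_geom_Ioc hρ0.le hρ1 k n) hK0
  have hnonneg : 0 ≤ ∑ j ∈ Finset.Icc 1 n, ρ ^ j * a (n - j) :=
    Finset.sum_nonneg fun j _ => mul_nonneg (pow_nonneg hρ0.le j) (ha0 _)
  rw [Real.dist_eq, sub_zero, abs_of_nonneg hnonneg, hIcc, ← hsplit]
  linarith

set_option maxHeartbeats 1000000 in
/-- let `ρ ∈ (0,1)`, `(y_m)` bounded with `y_m → y`, and `(ε_j)_{j≥1}`
i.i.d. Rademacher.  Then `S_n := Σ_{j=1}^n ρ^j y_{n−j} ε_j` converges in `L^p` to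
`y·Z` with `Z := Σ_{j=1}^∞ ρ^j ε_j` (convergent a.s. and in `L^p`); in particular
`E[|S_n|^p] → |y|^p E[|Z|^p]`. -/
theorem stmt14 (ρ : ℝ) (hρ : ρ ∈ Set.Ioo (0 : ℝ) 1)
    (yseq : ℕ → ℝ) (y : ℝ) (hbdd : ∃ M, ∀ m, |yseq m| ≤ M)
    (hy : Filter.Tendsto yseq Filter.atTop (nhds y))
    (p : ℝ) (hp : 1 < p)
    (Ω : Type*) [MeasureSpace Ω] [IsProbabilityMeasure (volume : Measure Ω)]
    (ε : ℕ → Ω → ℝ) (hmeas : ∀ j, Measurable (ε j))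
    (hvals : ∀ j, ∀ ω, ε j ω = 1 ∨ ε j ω = -1)
    (hfair : ∀ j, (volume : Measure Ω) {ω | ε j ω = 1} = 1 / 2)
    (hindep : ProbabilityTheory.iIndepFun ε volume) :
    ∃ Z : Ω → ℝ,
      (∀ᵐ ω : Ω,
        Filter.Tendsto (fun N => ∑ j ∈ Finset.Icc 1 N, ρ ^ j * ε j ω)
          Filter.atTop (nhds (Z ω))) ∧
      Integrable (fun ω => |Z ω| ^ p) ∧
      Filter.Tendsto
        (fun n => ∫ ω, |(∑ j ∈ Finset.Icc 1 n, ρ ^ j * yseq (n - j) * ε j ω) - y * Z ω| ^ p)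
        Filter.atTop (nhds 0) ∧
      Filter.Tendsto
        (fun n => ∫ ω, |∑ j ∈ Finset.Icc 1 n, ρ ^ j * yseq (n - j) * ε j ω| ^ p)
        Filter.atTop (nhds (|y| ^ p * ∫ ω, |Z ω| ^ p)) := by
  classical
  obtain ⟨hρ0, hρ1⟩ := hρ
  obtain ⟨M, hM⟩ := hbdd
  have hM0 : 0 ≤ M := le_trans (abs_nonneg _) (hM 0)
  have hp0 : 0 < p := lt_trans one_pos hp
  have h1ρ : 0 < 1 - ρ := by linarith
  set I1 : ℝ := (1 - ρ)⁻¹ with hI1def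
  have hI10 : 0 ≤ I1 := le_of_lt (inv_pos.2 h1ρ)
  have hε1 : ∀ j ω, |ε j ω| = 1 := fun j ω => by rcases hvals j ω with h | h <;> simp [h]
  have hyM : |y| ≤ M := le_of_tendsto hy.abs (Filter.Eventually.of_forall hM)
  -- summability
  have hsum : ∀ ω, Summable (fun i : ℕ => ρ ^ (i + 1) * ε (i + 1) ω) := by
    intro ω
    apply Summable.of_norm
    have h : ∀ i : ℕ, ‖ρ ^ (i + 1) * ε (i + 1) ω‖ = ρ * ρ ^ i := by
      intro i
      rw [Real.norm_eq_abs, abs_mul, hε1, mul_one, abs_pow, abs_of_nonneg hρ0.le,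
        pow_succ, mul_comm]
    simp_rw [h]
    exact (summable_geometric_of_lt_one hρ0.le hρ1).mul_left ρ
  set Z : Ω → ℝ := fun ω => ∑' i : ℕ, ρ ^ (i + 1) * ε (i + 1) ω with hZdef
  have hZsum : ∀ ω, HasSum (fun i : ℕ => ρ ^ (i + 1) * ε (i + 1) ω) (Z ω) :=
    fun ω => (hsum ω).hasSum
  have hPrw : ∀ (g : ℕ → ℝ) (N : ℕ),
      ∑ j ∈ Finset.Icc 1 N, g j = ∑ i ∈ Finset.range N, g (i + 1) := by
    intro g N
    rw [← Finset.Ico_add_one_right_eq_Icc, Finset.sum_Ico_eq_sum_range]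
    simp [Nat.add_comm]
  have hpartial : ∀ ω, Filter.Tendsto (fun N => ∑ j ∈ Finset.Icc 1 N, ρ ^ j * ε j ω)
      Filter.atTop (nhds (Z ω)) := fun ω =>
    (hZsum ω).tendsto_sum_nat.congr fun N => (hPrw (fun j => ρ ^ j * ε j ω) N).symm
  -- tail bound
  have htail : ∀ ω n, |Z ω - ∑ j ∈ Finset.Icc 1 n, ρ ^ j * ε j ω| ≤ ρ ^ (n + 1) * I1 := by
    intro ω n
    have hadd := Summable.sum_add_tsum_nat_add (f := fun i : ℕ => ρ ^ (i + 1) * ε (i + 1) ω) n (hsum ω)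
    have heq : Z ω - ∑ j ∈ Finset.Icc 1 n, ρ ^ j * ε j ω
        = ∑' i : ℕ, ρ ^ (i + n + 1) * ε (i + n + 1) ω := by
      rw [hPrw]
      exact sub_eq_iff_eq_add'.2 hadd.symm
    have hnorm : ∀ i : ℕ, ‖ρ ^ (i + n + 1) * ε (i + n + 1) ω‖ = ρ ^ (n + 1) * ρ ^ i := by
      intro i
      rw [Real.norm_eq_abs, abs_mul, hε1, mul_one, abs_pow, abs_of_nonneg hρ0.le,
        ← pow_add]
      ring_nf
    have hsum2 : Summable (fun i : ℕ => ‖ρ ^ (i + n + 1) * ε (i + n + 1) ω‖) := by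
      simp_rw [hnorm]
      exact (summable_geometric_of_lt_one hρ0.le hρ1).mul_left _
    rw [heq, ← Real.norm_eq_abs]
    calc ‖∑' i : ℕ, ρ ^ (i + n + 1) * ε (i + n + 1) ω‖
        ≤ ∑' i : ℕ, ‖ρ ^ (i + n + 1) * ε (i + n + 1) ω‖ := norm_tsum_le_tsum_norm hsum2
      _ = ∑' i : ℕ, ρ ^ (n + 1) * ρ ^ i := by simp_rw [hnorm]
      _ = ρ ^ (n + 1) * I1 := by
          rw [tsum_mul_left, tsum_geometric_of_lt_one hρ0.le hρ1]
  have hZbd : ∀ ω, |Z ω| ≤ I1 := by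
    intro ω
    calc |Z ω| = |Z ω - ∑ j ∈ Finset.Icc 1 0, ρ ^ j * ε j ω| := by simp
      _ ≤ ρ ^ (0 + 1) * I1 := htail ω 0
      _ ≤ 1 * I1 := by
          apply mul_le_mul_of_nonneg_right _ hI10
          rw [pow_one]; exact hρ1.le
      _ = I1 := one_mul _
  -- measurability
  have hPmeas : ∀ N : ℕ, Measurable (fun ω => ∑ j ∈ Finset.Icc 1 N, ρ ^ j * ε j ω) :=
    fun N => Finset.measurable_sum _ fun j _ => (hmeas j).const_mul (ρ ^ j)
  have hZmeas : Measurable Z :=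
    measurable_of_tendsto_metrizable hPmeas (tendsto_pi_nhds.2 hpartial)
  have hSmeas : ∀ n : ℕ,
      Measurable (fun ω => ∑ j ∈ Finset.Icc 1 n, ρ ^ j * yseq (n - j) * ε j ω) :=
    fun n => Finset.measurable_sum _ fun j _ => (hmeas j).const_mul (ρ ^ j * yseq (n - j))
  have hrpow : Continuous (fun x : ℝ => x ^ p) := Real.continuous_rpow_const hp0.le
  -- bound for S_n
  have hSbd : ∀ n ω,
      |∑ j ∈ Finset.Icc 1 n, ρ ^ j * yseq (n - j) * ε j ω| ≤ M * I1 := by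
    intro n ω
    calc |∑ j ∈ Finset.Icc 1 n, ρ ^ j * yseq (n - j) * ε j ω|
        ≤ ∑ j ∈ Finset.Icc 1 n, |ρ ^ j * yseq (n - j) * ε j ω| :=
          Finset.abs_sum_le_sum_abs _ _
      _ ≤ ∑ j ∈ Finset.Icc 1 n, M * ρ ^ j := by
          refine Finset.sum_le_sum fun j _ => ?_
          rw [abs_mul, abs_mul, hε1, mul_one, abs_pow, abs_of_nonneg hρ0.le, mul_comm M]
          exact mul_le_mul_of_nonneg_left (hM _) (pow_nonneg hρ0.le j)
      _ = M * ∑ j ∈ Finset.Icc 1 n, ρ ^ j := by rw [Finset.mul_sum]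
      _ ≤ M * I1 := mul_le_mul_of_nonneg_left (stmt14_geom_Icc hρ0.le hρ1 n) hM0
  -- deterministic bound b n for |S_n - y Z|
  set b : ℕ → ℝ :=
    fun n => (∑ j ∈ Finset.Icc 1 n, ρ ^ j * |yseq (n - j) - y|) + |y| * (ρ ^ (n + 1) * I1)
    with hbdef
  have hdiff : ∀ n ω,
      |(∑ j ∈ Finset.Icc 1 n, ρ ^ j * yseq (n - j) * ε j ω) - y * Z ω| ≤ b n := by
    intro n ω
    have halg : (∑ j ∈ Finset.Icc 1 n, ρ ^ j * yseq (n - j) * ε j ω) - y * Z ω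
        = (∑ j ∈ Finset.Icc 1 n,
            (ρ ^ j * yseq (n - j) * ε j ω - ρ ^ j * y * ε j ω))
          + y * ((∑ j ∈ Finset.Icc 1 n, ρ ^ j * ε j ω) - Z ω) := by
      rw [Finset.sum_sub_distrib]
      have h2 : y * ∑ j ∈ Finset.Icc 1 n, ρ ^ j * ε j ω
          = ∑ j ∈ Finset.Icc 1 n, ρ ^ j * y * ε j ω := by
        rw [Finset.mul_sum]
        exact Finset.sum_congr rfl fun j _ => by ring
      rw [mul_sub, h2]
      ring
    rw [halg]
    calc |(∑ j ∈ Finset.Icc 1 n, (ρ ^ j * yseq (n - j) * ε j ω - ρ ^ j * y * ε j ω))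
          + y * ((∑ j ∈ Finset.Icc 1 n, ρ ^ j * ε j ω) - Z ω)|
        ≤ |∑ j ∈ Finset.Icc 1 n, (ρ ^ j * yseq (n - j) * ε j ω - ρ ^ j * y * ε j ω)|
          + |y * ((∑ j ∈ Finset.Icc 1 n, ρ ^ j * ε j ω) - Z ω)| := abs_add_le _ _
      _ ≤ (∑ j ∈ Finset.Icc 1 n, ρ ^ j * |yseq (n - j) - y|) + |y| * (ρ ^ (n + 1) * I1) := by
          gcongr
          · calc |∑ j ∈ Finset.Icc 1 n, (ρ ^ j * yseq (n - j) * ε j ω - ρ ^ j * y * ε j ω)|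
                ≤ ∑ j ∈ Finset.Icc 1 n, |ρ ^ j * yseq (n - j) * ε j ω - ρ ^ j * y * ε j ω| :=
                  Finset.abs_sum_le_sum_abs _ _
              _ ≤ ∑ j ∈ Finset.Icc 1 n, ρ ^ j * |yseq (n - j) - y| := by
                  refine Finset.sum_le_sum fun j _ => ?_
                  have : ρ ^ j * yseq (n - j) * ε j ω - ρ ^ j * y * ε j ω
                      = ρ ^ j * (yseq (n - j) - y) * ε j ω := by ring
                  rw [this, abs_mul, abs_mul, hε1, mul_one, abs_pow,
                    abs_of_nonneg hρ0.le]
          · rw [abs_mul]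
            refine mul_le_mul_of_nonneg_left ?_ (abs_nonneg y)
            rw [abs_sub_comm]
            exact htail ω n
  -- b → 0
  have hb0 : Filter.Tendsto b Filter.atTop (nhds 0) := by
    have h1 : Filter.Tendsto
        (fun n => ∑ j ∈ Finset.Icc 1 n, ρ ^ j * |yseq (n - j) - y|)
        Filter.atTop (nhds 0) := by
      refine stmt14_conv hρ0 hρ1 (a := fun m => |yseq m - y|) (K := M + |y|) (fun m => abs_nonneg _) (fun m => ?_) ?_
      · calc |yseq m - y| ≤ |yseq m| + |y| := abs_sub _ _
          _ ≤ M + |y| := by linarith [hM m]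
      · have h := (hy.sub (tendsto_const_nhds (x := y))).abs
        simpa using h
    have h2 : Filter.Tendsto (fun n : ℕ => |y| * (ρ ^ (n + 1) * I1))
        Filter.atTop (nhds 0) := by
      have hg : Filter.Tendsto (fun n : ℕ => ρ ^ (n + 1)) Filter.atTop (nhds 0) := by
        have := (tendsto_pow_atTop_nhds_zero_of_lt_one hρ0.le hρ1).mul_const ρ
        simp only [zero_mul] at this
        exact this.congr fun n => by rw [← pow_succ]
      have := (hg.mul_const I1).const_mul |y|
      simpa using this
    have := h1.add h2
    simpa using this
  -- pointwise convergence of S_n to y Z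
  have hdiff0 : ∀ ω, Filter.Tendsto
      (fun n => |(∑ j ∈ Finset.Icc 1 n, ρ ^ j * yseq (n - j) * ε j ω) - y * Z ω|)
      Filter.atTop (nhds 0) := fun ω =>
    squeeze_zero (fun n => abs_nonneg _) (fun n => hdiff n ω) hb0
  have hpt : ∀ ω, Filter.Tendsto
      (fun n => ∑ j ∈ Finset.Icc 1 n, ρ ^ j * yseq (n - j) * ε j ω)
      Filter.atTop (nhds (y * Z ω)) := by
    intro ω
    rw [tendsto_iff_norm_sub_tendsto_zero]
    simpa [Real.norm_eq_abs] using hdiff0 ω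
  -- diff bound constant
  have hdiffbd : ∀ n ω,
      |(∑ j ∈ Finset.Icc 1 n, ρ ^ j * yseq (n - j) * ε j ω) - y * Z ω| ≤ M * I1 + M * I1 := by
    intro n ω
    calc |(∑ j ∈ Finset.Icc 1 n, ρ ^ j * yseq (n - j) * ε j ω) - y * Z ω|
        ≤ |∑ j ∈ Finset.Icc 1 n, ρ ^ j * yseq (n - j) * ε j ω| + |y * Z ω| := abs_sub _ _
      _ ≤ M * I1 + M * I1 := by
          gcongr
          · exact hSbd n ω
          · rw [abs_mul]
            exact mul_le_mul hyM (hZbd ω) (abs_nonneg _) hM0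
  refine ⟨Z, Filter.Eventually.of_forall hpartial, ?_, ?_, ?_⟩
  · -- integrability of |Z|^p
    refine (integrable_const (I1 ^ p)).mono'
      ((hrpow.measurable.comp hZmeas.abs).aestronglyMeasurable)
      (Filter.Eventually.of_forall fun ω => ?_)
    rw [Real.norm_eq_abs, abs_of_nonneg (Real.rpow_nonneg (abs_nonneg _) p)]
    exact Real.rpow_le_rpow (abs_nonneg _) (hZbd ω) hp0.le
  · -- L^p convergence to y Z
    have hdct := tendsto_integral_of_dominated_convergence (μ := (volume : Measure Ω))
      (F := fun n ω =>
        |(∑ j ∈ Finset.Icc 1 n, ρ ^ j * yseq (n - j) * ε j ω) - y * Z ω| ^ p)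
      (f := fun _ => (0 : ℝ)) (bound := fun _ => (M * I1 + M * I1) ^ p)
      (fun n => (hrpow.measurable.comp
        (((hSmeas n).sub (hZmeas.const_mul y)).abs)).aestronglyMeasurable)
      (integrable_const _)
      (fun n => Filter.Eventually.of_forall fun ω => by
        rw [Real.norm_eq_abs, abs_of_nonneg (Real.rpow_nonneg (abs_nonneg _) p)]
        exact Real.rpow_le_rpow (abs_nonneg _) (hdiffbd n ω) hp0.le)
      (Filter.Eventually.of_forall fun ω => by
        have := (hdiff0 ω).rpow_const (Or.inr hp0.le)
        simpa [Real.zero_rpow hp0.ne'] using this)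
    simpa using hdct
  · -- convergence of integrals of |S_n|^p
    have hdct := tendsto_integral_of_dominated_convergence (μ := (volume : Measure Ω))
      (F := fun n ω => |∑ j ∈ Finset.Icc 1 n, ρ ^ j * yseq (n - j) * ε j ω| ^ p)
      (f := fun ω => |y * Z ω| ^ p) (bound := fun _ => (M * I1) ^ p)
      (fun n => (hrpow.measurable.comp ((hSmeas n).abs)).aestronglyMeasurable)
      (integrable_const _)
      (fun n => Filter.Eventually.of_forall fun ω => by
        rw [Real.norm_eq_abs, abs_of_nonneg (Real.rpow_nonneg (abs_nonneg _) p)]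
        exact Real.rpow_le_rpow (abs_nonneg _) (hSbd n ω) hp0.le)
      (Filter.Eventually.of_forall fun ω =>
        ((hpt ω).abs).rpow_const (Or.inr hp0.le))
    have heq : (∫ ω, |y * Z ω| ^ p) = |y| ^ p * ∫ ω, |Z ω| ^ p := by
      simp_rw [abs_mul, Real.mul_rpow (abs_nonneg y) (abs_nonneg _)]
      exact integral_const_mul _ _
    rwa [heq] at hdct
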